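/- (Interpolation lemma) Let R ∈ 𝕊^m be symmetric negative definite, Q ∈ 𝕊^n, S ∈ ℝ^{n×m} with Q - S R⁻¹ Sᵀ ⪰ 0, and set P = [[Q, S],[Sᵀ, R]]. Then for vectors z ∈ ℝ^n, w ∈ ℝ^m, there exists Δ ∈ ℝ^{m×n} with w = Δ z and [I; Δ]ᵀ P [I; Δ] ⪰ 0 if and only if (z,w)ᵀ P (z,w) ≥ 0. -/

import Mathlib

open Matrix

private lemma dot_swap {k l : Type*} [Fintype k] [Fintype l] (M : Matrix k l ℝ) (x : k → ℝ) (y : l → ℝ) :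
    x ⬝ᵥ M *ᵥ y = y ⬝ᵥ Mᵀ *ᵥ x := by
  rw [dotProduct_mulVec, ← mulVec_transpose, dotProduct_comm]

private lemma quad_conj {k l : Type*} [Fintype k] [Fintype l] (L : Matrix k l ℝ)
    (P : Matrix k k ℝ) (x : l → ℝ) :
    x ⬝ᵥ (Lᵀ * P * L) *ᵥ x = (L *ᵥ x) ⬝ᵥ P *ᵥ (L *ᵥ x) := by
  rw [← mulVec_mulVec, ← mulVec_mulVec, dot_swap, transpose_transpose, dotProduct_comm]

private lemma vmv_mulVec {k l : ℕ} (v : Fin k → ℝ) (u : Fin l → ℝ) (x : Fin l → ℝ) :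
    vecMulVec v u *ᵥ x = (u ⬝ᵥ x) • v := by
  ext i
  simp only [vecMulVec_apply, mulVec, dotProduct, Pi.smul_apply, smul_eq_mul, Finset.sum_mul]
  exact Finset.sum_congr rfl fun j _ => by ring

/-- Interpolation lemma: with `R ≺ 0`, `Q - S R⁻¹ Sᵀ ⪰ 0` and
`P = [[Q, S],[Sᵀ, R]]`, for vectors `z`, `w` there exists `Δ` with `w = Δ z`
and `[I; Δ]ᵀ P [I; Δ] ⪰ 0` iff `(z,w)ᵀ P (z,w) ≥ 0`. -/
theorem stmt10 {n m : ℕ}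
    (R : Matrix (Fin m) (Fin m) ℝ) (hRsymm : R.IsSymm) (hR : (-R).PosDef)
    (Q : Matrix (Fin n) (Fin n) ℝ) (hQsymm : Q.IsSymm)
    (S : Matrix (Fin n) (Fin m) ℝ)
    (hSchur : (Q - S * R⁻¹ * Sᵀ).PosSemidef)
    (z : Fin n → ℝ) (w : Fin m → ℝ) :
    (∃ Δ : Matrix (Fin m) (Fin n) ℝ, w = Δ *ᵥ z ∧
        ((fromRows (1 : Matrix (Fin n) (Fin n) ℝ) Δ)ᵀ *
          fromBlocks Q S Sᵀ R *
          fromRows (1 : Matrix (Fin n) (Fin n) ℝ) Δ).PosSemidef) ↔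
      0 ≤ Sum.elim z w ⬝ᵥ (fromBlocks Q S Sᵀ R *ᵥ Sum.elim z w) := by
  have hdet : IsUnit R.det := by
    have h1 : 0 < (-R).det := hR.det_pos
    apply isUnit_iff_ne_zero.mpr
    intro h0
    rw [det_neg, h0, mul_zero] at h1
    exact lt_irrefl 0 h1
  have hRinv : R * R⁻¹ = 1 := mul_nonsing_inv R hdet
  have hRinvT : (R⁻¹)ᵀ = R⁻¹ := by rw [transpose_nonsing_inv, hRsymm.eq]
  set N : Matrix (Fin n) (Fin n) ℝ := Q - S * R⁻¹ * Sᵀ with hNdef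
  set G : Matrix (Fin m) (Fin n) ℝ := R⁻¹ * Sᵀ with hGdef
  set v : Fin m → ℝ := w + G *ᵥ z with hvdef
  have hNsymm : Nᵀ = N := by
    rw [hNdef, transpose_sub, hQsymm.eq, transpose_mul, transpose_mul, transpose_transpose, hRinvT,
      Matrix.mul_assoc]
  have hRG : R * G = Sᵀ := by rw [hGdef, mul_nonsing_inv_cancel_left _ _ hdet]
  have keyM : ∀ Δ : Matrix (Fin m) (Fin n) ℝ,
      (fromRows (1 : Matrix (Fin n) (Fin n) ℝ) Δ)ᵀ * fromBlocks Q S Sᵀ R *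
        fromRows (1 : Matrix (Fin n) (Fin n) ℝ) Δ
      = N + (Δ + G)ᵀ * R * (Δ + G) := by
    intro Δ
    rw [transpose_fromRows, transpose_one, fromCols_mul_fromBlocks, fromCols_mul_fromRows]
    have hGT : Gᵀ = S * R⁻¹ := by
      rw [hGdef, transpose_mul, transpose_transpose, hRinvT]
    rw [transpose_add, hGT, hNdef]
    have hSRR : S * R⁻¹ * R = S := by
      rw [Matrix.mul_assoc, nonsing_inv_mul R hdet, Matrix.mul_one]
    simp only [Matrix.add_mul, Matrix.mul_add, hSRR]
    rw [Matrix.mul_assoc Δᵀ R G, hRG, Matrix.mul_assoc S (R⁻¹) Sᵀ, ← hGdef]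
    simp only [Matrix.one_mul, Matrix.mul_one]
    abel
  have keyC : Sum.elim z w ⬝ᵥ (fromBlocks Q S Sᵀ R *ᵥ Sum.elim z w)
      = z ⬝ᵥ N *ᵥ z + v ⬝ᵥ R *ᵥ v := by
    rw [fromBlocks_mulVec, sumElim_dotProduct_sumElim]
    have hA : w ⬝ᵥ Sᵀ *ᵥ z = z ⬝ᵥ S *ᵥ w := by rw [dot_swap, transpose_transpose]
    have hB : G *ᵥ z ⬝ᵥ R *ᵥ w = z ⬝ᵥ S *ᵥ w := by
      rw [dot_swap, hRsymm.eq, mulVec_mulVec, hRG, hA]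
    have hC : G *ᵥ z ⬝ᵥ Sᵀ *ᵥ z = z ⬝ᵥ (S * R⁻¹ * Sᵀ) *ᵥ z := by
      rw [dot_swap, transpose_transpose, mulVec_mulVec, hGdef, ← Matrix.mul_assoc]
    simp only [hvdef, hNdef, mulVec_add, dotProduct_add, add_dotProduct, sub_mulVec,
      dotProduct_sub, mulVec_mulVec, hRG, Sum.elim_comp_inl, Sum.elim_comp_inr]
    rw [hA, hB, hC]
    ring
  constructor
  · rintro ⟨Δ, hw, hpsd⟩
    have hzw : Sum.elim z w = fromRows (1 : Matrix (Fin n) (Fin n) ℝ) Δ *ᵥ z := by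
      rw [fromRows_mulVec, one_mulVec, hw]
    rw [hzw]
    have h2 := hpsd.dotProduct_mulVec_nonneg z
    simp only [star_trivial] at h2
    rwa [quad_conj] at h2
  · intro h
    rw [keyC] at h
    have haN : 0 ≤ z ⬝ᵥ N *ᵥ z := by simpa using hSchur.dotProduct_mulVec_nonneg z
    rcases eq_or_lt_of_le haN with hzero | hpos
    · -- z ⬝ᵥ N *ᵥ z = 0, hence v = 0
      have hv0 : v = 0 := by
        by_contra hv
        have hlt := hR.dotProduct_mulVec_pos hv
        simp only [star_trivial, neg_mulVec, dotProduct_neg] at hlt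
        linarith
      refine ⟨-G, ?_, ?_⟩
      · have : w + G *ᵥ z = 0 := by rw [← hvdef, hv0]
        rw [neg_mulVec]
        exact eq_neg_of_add_eq_zero_left this
      · rw [keyM (-G)]
        simp only [neg_add_cancel, Matrix.mul_zero, transpose_zero, Matrix.zero_mul, add_zero]
        exact hSchur
    · -- z ⬝ᵥ N *ᵥ z > 0
      set a : ℝ := z ⬝ᵥ N *ᵥ z with hadef
      set u : Fin n → ℝ := N *ᵥ z with hudef
      refine ⟨a⁻¹ • vecMulVec v u - G, ?_, ?_⟩
      · rw [sub_mulVec, smul_mulVec, vmv_mulVec]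
        have huz : u ⬝ᵥ z = a := by rw [hudef, dotProduct_comm, hadef]
        rw [huz, smul_smul, inv_mul_cancel₀ (ne_of_gt hpos), one_smul, hvdef]
        funext i; simp
      · rw [keyM _, sub_add_cancel]
        have hRH : R.IsHermitian := by
          rw [Matrix.IsHermitian, conjTranspose_eq_transpose_of_trivial, hRsymm.eq]
        refine PosSemidef.of_dotProduct_mulVec_nonneg ?_ ?_
        · have h1 : ((a⁻¹ • vecMulVec v u)ᵀ * R * (a⁻¹ • vecMulVec v u)).IsHermitian := by
            have := isHermitian_conjTranspose_mul_mul (a⁻¹ • vecMulVec v u) hRH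
            rwa [conjTranspose_eq_transpose_of_trivial] at this
          exact Matrix.IsHermitian.add
            (by rw [Matrix.IsHermitian, conjTranspose_eq_transpose_of_trivial, hNsymm]) h1
        · intro x
          simp only [star_trivial]
          set t : ℝ := a⁻¹ * (u ⬝ᵥ x) with htdef
          have hGx : (a⁻¹ • vecMulVec v u) *ᵥ x = t • v := by
            rw [smul_mulVec, vmv_mulVec, smul_smul, htdef]
          have hsplit : x ⬝ᵥ (N + (a⁻¹ • vecMulVec v u)ᵀ * R * (a⁻¹ • vecMulVec v u)) *ᵥ x
              = x ⬝ᵥ N *ᵥ x + t^2 * (v ⬝ᵥ R *ᵥ v) := by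
            rw [add_mulVec, dotProduct_add, quad_conj, hGx, mulVec_smul, dotProduct_smul,
              smul_dotProduct, smul_eq_mul, smul_eq_mul]
            ring
          rw [hsplit]
          -- Cauchy-Schwarz step
          have hB : u ⬝ᵥ x = x ⬝ᵥ N *ᵥ z := by rw [hudef, dotProduct_comm]
          have hCS : 0 ≤ x ⬝ᵥ N *ᵥ x - t * (x ⬝ᵥ N *ᵥ z) := by
            have hy := hSchur.dotProduct_mulVec_nonneg (x + (-t) • z)
            simp only [star_trivial, ← hNdef] at hy
            have hswap : z ⬝ᵥ N *ᵥ x = x ⬝ᵥ N *ᵥ z := by rw [dot_swap, hNsymm]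
            simp only [mulVec_add, dotProduct_add, add_dotProduct, mulVec_smul,
              dotProduct_smul, smul_dotProduct, smul_eq_mul, hswap, ← hadef] at hy
            have hta : t * a = u ⬝ᵥ x := by
              rw [htdef, mul_comm a⁻¹ _, mul_assoc, inv_mul_cancel₀ (ne_of_gt hpos), mul_one]
            have h5 : t * (t * a) = t * (x ⬝ᵥ N *ᵥ z) := by rw [hta, hB]
            linarith [hy, h5]
          have hva : 0 ≤ a + v ⬝ᵥ R *ᵥ v := h
          have hta : t * a = u ⬝ᵥ x := by
            rw [htdef, mul_comm a⁻¹ _, mul_assoc, inv_mul_cancel₀ (ne_of_gt hpos), mul_one]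
          have hE : t ^ 2 * a = t * (x ⬝ᵥ N *ᵥ z) := by rw [sq, mul_assoc, hta, hB]
          linarith [hCS, mul_nonneg (sq_nonneg t) hva, hE]
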